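/- (Probabilistic Banach–Stone) Let ⋆ be a continuous and sup-continuous triangle function whose monoid (Δ⁺,⋆) has trivial group of units, and let (G,·,D,⋆) and (G',·,D',⋆) be probabilistic invariant complete metric groups. Then G and G' are isometrically isomorphic as groups if and only if (Lip¹_⋆(G,Δ⁺), ⊙, 𝔻̄) and (Lip¹_⋆(G',Δ⁺), ⊙, 𝔻̄) are isometrically isomorphic as probabilistic metric monoids. -/

import Mathlib

open Filter Topology Set

/-- A (real-domain representation of a) distribution function in Δ⁺ :
nondecreasing, with values in [0,1], left-continuous, vanishing on (-∞,0]. -/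
def MemDP (f : ℝ → ℝ) : Prop :=
  Monotone f ∧ (∀ t, 0 ≤ f t) ∧ (∀ t, f t ≤ 1) ∧
  (∀ t : ℝ, Tendsto f (nhdsWithin t (Set.Iio t)) (nhds (f t))) ∧
  (∀ t ≤ (0:ℝ), f t = 0)

/-- The distribution H₀. -/
noncomputable def H0 : ℝ → ℝ := fun t => if 0 < t then 1 else 0

/-- The distribution H_∞ (zero at every finite point). -/
def Hinf : ℝ → ℝ := fun _ => 0

/-- Pointwise order on distribution functions. -/
def dpLE (f g : ℝ → ℝ) : Prop := ∀ t, f t ≤ g t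

/-- Triangle function on Δ⁺. -/
structure IsTriangle (star : (ℝ → ℝ) → (ℝ → ℝ) → (ℝ → ℝ)) : Prop where
  mem : ∀ f g, MemDP f → MemDP g → MemDP (star f g)
  comm : ∀ f g, MemDP f → MemDP g → star f g = star g f
  assoc : ∀ f g h, MemDP f → MemDP g → MemDP h →
    star f (star g h) = star (star f g) h
  ident : ∀ f, MemDP f → star f H0 = f
  mono : ∀ f g h, MemDP f → MemDP g → MemDP h → dpLE f g → dpLE (star f h) (star g h)

/-- Sup-continuity of a triangle function (suprema in Δ⁺ are pointwise). -/
def SupCont (star : (ℝ → ℝ) → (ℝ → ℝ) → (ℝ → ℝ)) : Prop :=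
  ∀ (I : Type) (_ : Nonempty I) (F : I → ℝ → ℝ) (L : ℝ → ℝ),
    (∀ i, MemDP (F i)) → MemDP L →
    ∀ t, (⨆ i, star (F i) L t) = star (fun s => ⨆ i, F i s) L t

/-- Weak convergence in Δ⁺: pointwise convergence at each continuity point of the limit. -/
def WConv (Fn : ℕ → ℝ → ℝ) (F : ℝ → ℝ) : Prop :=
  ∀ t, ContinuousAt F t → Tendsto (fun n => Fn n t) atTop (nhds (F t))

/-- Continuity of a triangle function w.r.t. weak convergence. -/
def StarCont (star : (ℝ → ℝ) → (ℝ → ℝ) → (ℝ → ℝ)) : Prop :=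
  ∀ (Fn Ln : ℕ → ℝ → ℝ) (F L : ℝ → ℝ),
    (∀ n, MemDP (Fn n)) → (∀ n, MemDP (Ln n)) → MemDP F → MemDP L →
    WConv Fn F → WConv Ln L → WConv (fun n => star (Fn n) (Ln n)) (star F L)

/-- Probabilistic metric space (G, D, ⋆). -/
structure IsPMS {G : Type} (D : G → G → ℝ → ℝ)
    (star : (ℝ → ℝ) → (ℝ → ℝ) → (ℝ → ℝ)) : Prop where
  tri : IsTriangle star
  mem : ∀ p q, MemDP (D p q)
  eq_iff : ∀ p q, D p q = H0 ↔ p = q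
  symm : ∀ p q, D p q = D q p
  triangle_ineq : ∀ p q r, dpLE (star (D p q) (D q r)) (D p r)

/-- Probabilistic invariant metric group. -/
structure IsPIMG {G : Type} [Group G] (D : G → G → ℝ → ℝ)
    (star : (ℝ → ℝ) → (ℝ → ℝ) → (ℝ → ℝ)) extends IsPMS D star : Prop where
  invL : ∀ p q r : G, D (r * p) (r * q) = D p q
  invR : ∀ p q r : G, D (p * r) (q * r) = D p q

/-- Probabilistic 1-Lipschitz map. -/
def Lip1 {G : Type} (D : G → G → ℝ → ℝ) (star : (ℝ → ℝ) → (ℝ → ℝ) → (ℝ → ℝ))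
    (f : G → ℝ → ℝ) : Prop :=
  (∀ x, MemDP (f x)) ∧ ∀ x y, dpLE (star (D x y) (f y)) (f x)

/-- δ_a(y) = D(y,a). -/
def dlt {G : Type} (D : G → G → ℝ → ℝ) (a : G) : G → ℝ → ℝ := fun y => D y a

/-- Sup-convolution (f ⊙ g)(x) = sup_{yz = x} f(y) ⋆ g(z), pointwise. -/
noncomputable def sconv {G : Type} [Group G] (star : (ℝ → ℝ) → (ℝ → ℝ) → (ℝ → ℝ))
    (f g : G → ℝ → ℝ) : G → ℝ → ℝ :=
  fun x t => ⨆ y : G, star (f (x * y⁻¹)) (g y) t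

/-- Cauchy sequence for a probabilistic metric: D(a_n, a_p) → H₀ weakly. -/
def PCauchy {G : Type} (D : G → G → ℝ → ℝ) (a : ℕ → G) : Prop :=
  ∀ t > (0:ℝ), ∀ ε > (0:ℝ), ∃ N, ∀ n ≥ N, ∀ p ≥ N, 1 - ε ≤ D (a n) (a p) t

/-- Π(G): probabilistic 1-Lipschitz maps that are pointwise weak limits of δ_{a_n}
for some Cauchy sequence (a_n). -/
def InPi {G : Type} (D : G → G → ℝ → ℝ) (star : (ℝ → ℝ) → (ℝ → ℝ) → (ℝ → ℝ))
    (f : G → ℝ → ℝ) : Prop :=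
  Lip1 D star f ∧ ∃ a : ℕ → G, PCauchy D a ∧ ∀ x, WConv (fun n => D (a n) x) (f x)

/-- 𝔻(f,g) = sup_{x∈G} f(x) ⋆ g(x), pointwise. -/
noncomputable def DD {G : Type} (star : (ℝ → ℝ) → (ℝ → ℝ) → (ℝ → ℝ))
    (f g : G → ℝ → ℝ) : ℝ → ℝ :=
  fun t => ⨆ x : G, star (f x) (g x) t

/-- t-norm on [0,1]. -/
structure IsTnorm (T : ℝ → ℝ → ℝ) : Prop where
  mem : ∀ x ∈ Set.Icc (0:ℝ) 1, ∀ y ∈ Set.Icc (0:ℝ) 1, T x y ∈ Set.Icc (0:ℝ) 1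
  comm : ∀ x y, T x y = T y x
  assoc : ∀ x y z, T x (T y z) = T (T x y) z
  mono : ∀ x y z, y ≤ z → T x y ≤ T x z
  one : ∀ x ∈ Set.Icc (0:ℝ) 1, T x 1 = x

/-- Left-continuity of a t-norm (in each variable; by commutativity one suffices). -/
def LeftCtsTnorm (T : ℝ → ℝ → ℝ) : Prop :=
  ∀ y x : ℝ, Tendsto (fun s => T s y) (nhdsWithin x (Set.Iio x)) (nhds (T x y))

/-- The triangle function ⋆_T : (F ⋆_T L)(t) = sup_{s+u=t} T(F(s), L(u)). -/
noncomputable def starT (T : ℝ → ℝ → ℝ) (f g : ℝ → ℝ) : ℝ → ℝ :=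
  fun t => ⨆ s : ℝ, T (f s) (g (t - s))

/-- The extended probabilistic metric 𝔻̄ on Lip¹_⋆(G,Δ⁺). -/
noncomputable def DDbar {G : Type} (D : G → G → ℝ → ℝ)
    (star : (ℝ → ℝ) → (ℝ → ℝ) → (ℝ → ℝ)) (f g : G → ℝ → ℝ) : ℝ → ℝ := by
  classical
  exact if InPi D star f ∧ InPi D star g then DD star f g
    else if f = g then H0 else Hinf

/-! ### Auxiliary lemmas -/

lemma memDP_H0 : MemDP H0 := by
  refine ⟨?_, ?_, ?_, ?_, ?_⟩
  · intro s t hst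
    simp only [H0]
    split_ifs with h1 h2 <;> norm_num
    exact h2 (h1.trans_le hst)
  · intro t; simp only [H0]; split_ifs <;> norm_num
  · intro t; simp only [H0]; split_ifs <;> norm_num
  · intro t
    rcases lt_or_ge 0 t with ht | ht
    · have hev : H0 =ᶠ[nhdsWithin t (Set.Iio t)] fun _ => (1:ℝ) := by
        filter_upwards [nhdsWithin_le_nhds (Ioi_mem_nhds ht)] with s hs
        simp [H0, show (0:ℝ) < s from hs]
      rw [show H0 t = 1 by simp [H0, ht]]
      exact tendsto_const_nhds.congr' hev.symm
    · have hev : H0 =ᶠ[nhdsWithin t (Set.Iio t)] fun _ => (0:ℝ) := by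
        filter_upwards [self_mem_nhdsWithin] with s hs
        simp [H0, not_lt.2 (le_of_lt (lt_of_lt_of_le hs ht))]
      rw [show H0 t = 0 by simp [H0, not_lt.2 ht]]
      exact tendsto_const_nhds.congr' hev.symm
  · intro t ht; simp [H0, not_lt.2 ht]

lemma H0_pos {t : ℝ} (ht : 0 < t) : H0 t = 1 := by simp [H0, ht]

lemma dpLE_H0 {f : ℝ → ℝ} (hf : MemDP f) : dpLE f H0 := by
  intro t
  rcases lt_or_ge 0 t with ht | ht
  · rw [H0_pos ht]; exact hf.2.2.1 t
  · rw [show H0 t = 0 by simp [H0, not_lt.2 ht], hf.2.2.2.2 t ht]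

lemma continuousAt_H0 {t : ℝ} (ht : 0 < t) : ContinuousAt H0 t := by
  have hev : (fun _ : ℝ => (1:ℝ)) =ᶠ[nhds t] H0 := by
    filter_upwards [Ioi_mem_nhds ht] with s hs
    simp [H0, show (0:ℝ) < s from hs]
  exact continuousAt_const.congr hev

lemma star_le_right {star : (ℝ → ℝ) → (ℝ → ℝ) → (ℝ → ℝ)} (tri : IsTriangle star)
    {f g : ℝ → ℝ} (hf : MemDP f) (hg : MemDP g) : dpLE (star f g) g := by
  have h1 : dpLE (star f g) (star H0 g) := tri.mono f H0 g hf memDP_H0 hg (dpLE_H0 hf)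
  have h2 : star H0 g = g := by rw [tri.comm H0 g memDP_H0 hg, tri.ident g hg]
  intro t; have := h1 t; rwa [h2] at this

lemma star_le_left {star : (ℝ → ℝ) → (ℝ → ℝ) → (ℝ → ℝ)} (tri : IsTriangle star)
    {f g : ℝ → ℝ} (hf : MemDP f) (hg : MemDP g) : dpLE (star f g) f := by
  rw [tri.comm f g hf hg]; exact star_le_right tri hg hf

lemma mono_sSup_Iio {φ : ℝ → ℝ} (hm : Monotone φ) (t : ℝ)
    (h : Tendsto φ (nhdsWithin t (Set.Iio t)) (nhds (φ t))) :
    sSup (φ '' Set.Iio t) = φ t :=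
  tendsto_nhds_unique (hm.tendsto_nhdsLT t) h

lemma mono_leftCts {φ : ℝ → ℝ} (hm : Monotone φ) (t : ℝ)
    (h : sSup (φ '' Set.Iio t) = φ t) :
    Tendsto φ (nhdsWithin t (Set.Iio t)) (nhds (φ t)) := by
  simpa [h] using hm.tendsto_nhdsLT t

lemma memDP_iSup {I : Type} [Nonempty I] (F : I → ℝ → ℝ) (h : ∀ i, MemDP (F i)) :
    MemDP (fun t => ⨆ i, F i t) := by
  have hb : ∀ t, BddAbove (Set.range fun i => F i t) :=
    fun t => ⟨1, by rintro _ ⟨i, rfl⟩; exact (h i).2.2.1 t⟩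
  have hmono : Monotone (fun t => ⨆ i, F i t) := by
    intro s t hst
    exact ciSup_le fun i => ((h i).1 hst).trans (le_ciSup (hb t) i)
  refine ⟨hmono, ?_, ?_, ?_, ?_⟩
  · intro t
    exact le_ciSup_of_le (hb t) (Classical.arbitrary I) ((h _).2.1 t)
  · intro t; exact ciSup_le fun i => (h i).2.2.1 t
  · intro t
    apply mono_leftCts hmono
    apply le_antisymm
    · apply csSup_le ((Set.nonempty_Iio).image _)
      rintro _ ⟨s, hs, rfl⟩
      exact hmono (le_of_lt hs)
    · apply ciSup_le fun i => ?_
      have h1 : sSup (F i '' Set.Iio t) = F i t :=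
        mono_sSup_Iio (h i).1 t ((h i).2.2.2.1 t)
      rw [← h1]
      apply csSup_le ((Set.nonempty_Iio).image _)
      rintro _ ⟨s, hs, rfl⟩
      have h2 : F i s ≤ ⨆ j, F j s := le_ciSup (hb s) i
      refine h2.trans (le_csSup ?_ ?_)
      · exact ⟨(fun u => ⨆ j, F j u) t, by rintro _ ⟨u, hu, rfl⟩; exact hmono (le_of_lt hu)⟩
      · exact ⟨s, hs, rfl⟩
  · intro t ht
    apply le_antisymm (ciSup_le fun i => le_of_eq ((h i).2.2.2.2 t ht))
    exact le_ciSup_of_le (hb t) (Classical.arbitrary I)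
      (le_of_eq ((h _).2.2.2.2 t ht).symm)

lemma dlt_lip1 {G : Type} [Group G] {D : G → G → ℝ → ℝ}
    {star : (ℝ → ℝ) → (ℝ → ℝ) → (ℝ → ℝ)} (h : IsPMS D star) (a : G) :
    Lip1 D star (dlt D a) :=
  ⟨fun x => h.mem x a, fun x y => h.triangle_ineq x y a⟩

lemma dlt_inj {G : Type} [Group G] {D : G → G → ℝ → ℝ}
    {star : (ℝ → ℝ) → (ℝ → ℝ) → (ℝ → ℝ)} (h : IsPMS D star) {a b : G}
    (hab : dlt D a = dlt D b) : a = b := by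
  have h1 : D a a = D a b := by
    have := congrFun hab a; simpa [dlt] using this
  have h2 : D a a = H0 := (h.eq_iff a a).2 rfl
  exact ((h.eq_iff a b).1 (h1.symm.trans h2)).symm ▸ rfl

lemma dlt_inj' {G : Type} [Group G] {D : G → G → ℝ → ℝ}
    {star : (ℝ → ℝ) → (ℝ → ℝ) → (ℝ → ℝ)} (h : IsPMS D star) {a b : G}
    (hab : dlt D a = dlt D b) : a = b := dlt_inj h hab

lemma sconv_dlt {G : Type} [Group G] {D : G → G → ℝ → ℝ}
    {star : (ℝ → ℝ) → (ℝ → ℝ) → (ℝ → ℝ)} (h : IsPIMG D star) (a b : G) :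
    sconv star (dlt D a) (dlt D b) = dlt D (a * b) := by
  funext x t
  simp only [sconv, dlt]
  apply le_antisymm
  · apply ciSup_le fun y => ?_
    have e1 : D (x * y⁻¹) a = D x (a * y) := by
      have := h.invR (x * y⁻¹) a y; simpa using this.symm
    have e2 : D y b = D (a * y) (a * b) := (h.invL y b a).symm
    rw [e1, e2]
    exact h.triangle_ineq x (a * y) (a * b) t
  · have hb : BddAbove (Set.range fun y => star (D (x * y⁻¹) a) (D y b) t) :=
      ⟨1, by rintro _ ⟨y, rfl⟩; exact (h.tri.mem _ _ (h.mem _ _) (h.mem _ _)).2.2.1 t⟩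
    refine le_trans ?_ (le_ciSup hb b)
    have e3 : D b b = H0 := (h.eq_iff b b).2 rfl
    rw [e3, h.tri.ident _ (h.mem _ _)]
    have e4 : D (x * b⁻¹) a = D x (a * b) := by
      have := h.invR (x * b⁻¹) a b; simpa using this.symm
    rw [e4]

lemma DD_dlt {G : Type} [Group G] {D : G → G → ℝ → ℝ}
    {star : (ℝ → ℝ) → (ℝ → ℝ) → (ℝ → ℝ)} (h : IsPMS D star) (a b : G) :
    DD star (dlt D a) (dlt D b) = D a b := by
  funext t
  simp only [DD, dlt]
  apply le_antisymm
  · apply ciSup_le fun x => ?_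
    rw [h.symm x a]
    exact h.triangle_ineq a x b t
  · have hb : BddAbove (Set.range fun x => star (D x a) (D x b) t) :=
      ⟨1, by rintro _ ⟨x, rfl⟩; exact (h.tri.mem _ _ (h.mem _ _) (h.mem _ _)).2.2.1 t⟩
    refine le_trans ?_ (le_ciSup hb a)
    rw [(h.eq_iff a a).2 rfl, h.tri.comm H0 (D a b) memDP_H0 (h.mem a b),
      h.tri.ident _ (h.mem a b)]

lemma dlt_inPi {G : Type} [Group G] {D : G → G → ℝ → ℝ}
    {star : (ℝ → ℝ) → (ℝ → ℝ) → (ℝ → ℝ)} (h : IsPMS D star) (a : G) :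
    InPi D star (dlt D a) := by
  refine ⟨dlt_lip1 h a, fun _ => a, ?_, ?_⟩
  · intro t ht ε hε
    refine ⟨0, fun n _ p _ => ?_⟩
    rw [(h.eq_iff a a).2 rfl, H0_pos ht]
    linarith
  · intro x t _
    simp only [dlt]
    rw [h.symm x a]
    exact tendsto_const_nhds

lemma sconv_lip1 {G : Type} [Group G] {D : G → G → ℝ → ℝ}
    {star : (ℝ → ℝ) → (ℝ → ℝ) → (ℝ → ℝ)} (h : IsPIMG D star) (hsc : SupCont star)
    {f g : G → ℝ → ℝ} (hf : Lip1 D star f) (hg : Lip1 D star g) :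
    Lip1 D star (sconv star f g) := by
  have : Nonempty G := ⟨1⟩
  have hmem : ∀ x, MemDP (sconv star f g x) := fun x =>
    memDP_iSup _ (fun y => h.tri.mem _ _ (hf.1 _) (hg.1 _))
  refine ⟨hmem, ?_⟩
  intro x x' t
  have e1 : star (D x x') (sconv star f g x') t
      = ⨆ y, star (star (f (x' * y⁻¹)) (g y)) (D x x') t := by
    rw [h.tri.comm _ _ (h.mem x x') (hmem x')]
    exact (hsc G ⟨1⟩ (fun y => star (f (x' * y⁻¹)) (g y)) (D x x')
      (fun y => h.tri.mem _ _ (hf.1 _) (hg.1 _)) (h.mem x x') t).symm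
  rw [e1]
  apply ciSup_le fun y => ?_
  have e2 : star (star (f (x' * y⁻¹)) (g y)) (D x x')
      = star (star (D x x') (f (x' * y⁻¹))) (g y) := by
    rw [h.tri.comm _ _ (h.tri.mem _ _ (hf.1 _) (hg.1 _)) (h.mem x x'),
        h.tri.assoc _ _ _ (h.mem x x') (hf.1 _) (hg.1 _)]
  rw [e2]
  have e3 : D (x * y⁻¹) (x' * y⁻¹) = D x x' := by
    have := h.invR (x * y⁻¹) (x' * y⁻¹) y; simpa using this.symm
  have hLip : dpLE (star (D x x') (f (x' * y⁻¹))) (f (x * y⁻¹)) := by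
    rw [← e3]; exact hf.2 (x * y⁻¹) (x' * y⁻¹)
  have h4 : star (star (D x x') (f (x' * y⁻¹))) (g y) t ≤ star (f (x * y⁻¹)) (g y) t :=
    h.tri.mono _ _ _ (h.tri.mem _ _ (h.mem _ _) (hf.1 _)) (hf.1 _) (hg.1 _) hLip t
  refine h4.trans ?_
  have hbdd : BddAbove (Set.range fun y' => star (f (x * y'⁻¹)) (g y') t) :=
    ⟨1, by rintro _ ⟨y', rfl⟩; exact (h.tri.mem _ _ (hf.1 _) (hg.1 _)).2.2.1 t⟩
  exact le_ciSup hbdd y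

lemma wconv_of_bound {Fn : ℕ → ℝ → ℝ} (hmem : ∀ n, MemDP (Fn n))
    (hb : ∀ (n : ℕ) (t : ℝ), 1 / (n + 1 : ℝ) ≤ t → 1 - 1 / (n + 1 : ℝ) ≤ Fn n t) :
    WConv Fn H0 := by
  intro t _
  rcases lt_or_ge 0 t with ht | ht
  · rw [H0_pos ht]
    have hlow : Tendsto (fun n : ℕ => 1 - 1 / (n + 1 : ℝ)) atTop (nhds 1) := by
      have h1 := tendsto_one_div_add_atTop_nhds_zero_nat (𝕜 := ℝ)
      have h2 : Tendsto (fun n : ℕ => 1 - 1 / (n + 1 : ℝ)) atTop (nhds (1 - 0)) :=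
        Tendsto.sub tendsto_const_nhds h1
      simpa using h2
    apply tendsto_of_tendsto_of_tendsto_of_le_of_le' hlow tendsto_const_nhds
    · have : ∀ᶠ n : ℕ in atTop, 1 / (n + 1 : ℝ) < t := by
        apply Filter.Tendsto.eventually_lt_const ht
          tendsto_one_div_add_atTop_nhds_zero_nat
      filter_upwards [this] with n hn
      exact hb n t hn.le
    · filter_upwards with n
      exact (hmem n).2.2.1 t
  · have h0 : H0 t = 0 := by simp [H0, not_lt.2 ht]
    rw [h0]
    have : ∀ n, Fn n t = 0 := fun n => (hmem n).2.2.2.2 t ht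
    simpa [this] using tendsto_const_nhds (α := ℝ) (x := (0:ℝ)) (f := atTop (α := ℕ))

/-- If `f` is 1-Lipschitz, `f (b n) → H0` weakly and `b n → z`, then `f z = H0`
and `f` dominates `δ_z`. -/
lemma lip1_limit {G : Type} [Group G] {D : G → G → ℝ → ℝ}
    {star : (ℝ → ℝ) → (ℝ → ℝ) → (ℝ → ℝ)} (h : IsPIMG D star) (hc : StarCont star)
    {f : G → ℝ → ℝ} (hf : Lip1 D star f) {b : ℕ → G} {z : G}
    (hfb : WConv (fun n => f (b n)) H0)
    (hbz : WConv (fun n => D (b n) z) H0) :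
    f z = H0 ∧ ∀ x, dpLE (dlt D z x) (f x) := by
  have hzb : WConv (fun n => D z (b n)) H0 := by
    have : (fun n => D z (b n)) = fun n => D (b n) z := funext fun n => h.symm z (b n)
    rw [this]; exact hbz
  have hstar : WConv (fun n => star (D z (b n)) (f (b n))) H0 := by
    have := hc (fun n => D z (b n)) (fun n => f (b n)) H0 H0
      (fun n => h.mem _ _) (fun n => hf.1 _) memDP_H0 memDP_H0 hzb hfb
    rwa [h.tri.ident H0 memDP_H0] at this
  have hfz : f z = H0 := by
    funext t
    rcases lt_or_ge 0 t with ht | ht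
    · have htd := hstar t (continuousAt_H0 ht)
      rw [H0_pos ht] at htd ⊢
      have hge : (1:ℝ) ≤ f z t :=
        le_of_tendsto htd (Filter.Eventually.of_forall fun n => hf.2 z (b n) t)
      exact le_antisymm ((hf.1 z).2.2.1 t) hge
    · rw [(hf.1 z).2.2.2.2 t ht]
      simp [H0, not_lt.2 ht]
  refine ⟨hfz, fun x t => ?_⟩
  have := hf.2 x z t
  rw [hfz, h.tri.ident _ (h.mem x z)] at this
  simpa [dlt] using this

/-- Any unit of the monoid (Lip¹, ⊙) is a Dirac map `δ_z`, provided `G` is complete. -/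
lemma unit_eq_dlt {G : Type} [Group G] {D : G → G → ℝ → ℝ}
    {star : (ℝ → ℝ) → (ℝ → ℝ) → (ℝ → ℝ)} (h : IsPIMG D star) (hc : StarCont star)
    (hcomp : ∀ a : ℕ → G, PCauchy D a → ∃ z : G, WConv (fun n => D (a n) z) H0)
    {f g : G → ℝ → ℝ} (hf : Lip1 D star f) (hg : Lip1 D star g)
    (hfg : sconv star f g = dlt D 1) (hgf : sconv star g f = dlt D 1) :
    ∃ z, f = dlt D z := by
  have hne : Nonempty G := ⟨1⟩
  have hbddfg : ∀ (x : G) (t : ℝ),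
      BddAbove (Set.range fun y => star (f (x * y⁻¹)) (g y) t) := fun x t =>
    ⟨1, by rintro _ ⟨y, rfl⟩; exact (h.tri.mem _ _ (hf.1 _) (hg.1 _)).2.2.1 t⟩
  -- the sup defining (f ⊙ g)(1) is 1 at every t > 0
  have hsup : ∀ t : ℝ, 0 < t → (⨆ y : G, star (f (1 * y⁻¹)) (g y) t) = 1 := by
    intro t ht
    have := congrFun (congrFun hfg 1) t
    simp only [sconv, dlt] at this
    rw [this, (h.eq_iff 1 1).2 rfl, H0_pos ht]
  -- choose an "approximate unit" sequence
  have hchoice : ∀ n : ℕ, ∃ y : G,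
      1 - 1 / (n + 1 : ℝ) < star (f (1 * y⁻¹)) (g y) (1 / (n + 1 : ℝ)) := by
    intro n
    have hpos : (0:ℝ) < 1 / (n + 1 : ℝ) := by positivity
    apply exists_lt_of_lt_ciSup
    rw [hsup _ hpos]
    have : (0:ℝ) < 1 / (n + 1 : ℝ) := hpos
    linarith
  choose y hy using hchoice
  set a : ℕ → G := fun n => (y n)⁻¹ with ha
  have hy' : ∀ n : ℕ, 1 - 1 / (n + 1 : ℝ) ≤ star (f (a n)) (g ((a n)⁻¹)) (1 / (n + 1 : ℝ)) := by
    intro n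
    have := (hy n).le
    simpa [ha] using this
  -- f (a n) → H0 and g ((a n)⁻¹) → H0 weakly
  have hfa : WConv (fun n => f (a n)) H0 := by
    apply wconv_of_bound (fun n => hf.1 _)
    intro n t htn
    refine le_trans (hy' n) ?_
    have h1 : star (f (a n)) (g ((a n)⁻¹)) (1 / (n + 1 : ℝ)) ≤ f (a n) (1 / (n + 1:ℝ)) :=
      star_le_left h.tri (hf.1 _) (hg.1 _) _
    exact h1.trans ((hf.1 _).1 htn)
  have hga : WConv (fun n => g ((a n)⁻¹)) H0 := by
    apply wconv_of_bound (fun n => hg.1 _)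
    intro n t htn
    refine le_trans (hy' n) ?_
    have h1 : star (f (a n)) (g ((a n)⁻¹)) (1 / (n + 1 : ℝ)) ≤ g ((a n)⁻¹) (1 / (n + 1:ℝ)) :=
      star_le_right h.tri (hf.1 _) (hg.1 _) _
    exact h1.trans ((hg.1 _).1 htn)
  -- each D (a n) (a p) dominates star (f (a n)) (g ((a p)⁻¹))
  have hdom : ∀ n p : ℕ, ∀ t : ℝ,
      star (f (a n)) (g ((a p)⁻¹)) t ≤ D (a n) (a p) t := by
    intro n p t
    have e1 : D (a n * (a p)⁻¹) 1 = D (a n) (a p) := by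
      have := h.invR (a n * (a p)⁻¹) 1 (a p); simpa using this.symm
    have e2 := congrFun (congrFun hfg (a n * (a p)⁻¹)) t
    simp only [sconv, dlt] at e2
    rw [← e1]
    rw [← e2]
    have h3 := le_ciSup (hbddfg (a n * (a p)⁻¹) t) ((a p)⁻¹)
    simpa using h3
  -- (a n) is Cauchy
  have hcau : PCauchy D a := by
    intro t ht ε hε
    by_contra hcon
    push_neg at hcon
    have hcon' : ∀ N, ∃ n ≥ N, ∃ p ≥ N, D (a n) (a p) t < 1 - ε := by
      intro N
      obtain ⟨n, hn, p, hp, hlt⟩ := hcon N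
      exact ⟨n, hn, p, hp, by linarith⟩
    choose nn hnn pp hpp hlt using hcon'
    have hnt : Tendsto nn atTop atTop := tendsto_atTop_mono hnn tendsto_id
    have hpt : Tendsto pp atTop atTop := tendsto_atTop_mono hpp tendsto_id
    have hF : WConv (fun k => f (a (nn k))) H0 := fun t' ht' => (hfa t' ht').comp hnt
    have hL : WConv (fun k => g ((a (pp k))⁻¹)) H0 := fun t' ht' => (hga t' ht').comp hpt
    have hS : WConv (fun k => star (f (a (nn k))) (g ((a (pp k))⁻¹))) H0 := by
      have := hc _ _ H0 H0 (fun k => hf.1 _) (fun k => hg.1 _) memDP_H0 memDP_H0 hF hL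
      rwa [h.tri.ident H0 memDP_H0] at this
    have htd := hS t (continuousAt_H0 ht)
    rw [H0_pos ht] at htd
    have hev : ∀ᶠ k in atTop, 1 - ε < star (f (a (nn k))) (g ((a (pp k))⁻¹)) t := by
      apply htd.eventually_const_lt; linarith
    obtain ⟨k, hk⟩ := hev.exists
    exact absurd (lt_of_lt_of_le hk (hdom (nn k) (pp k) t)) (not_lt.2 (hlt k).le)
  -- complete: a n → z
  obtain ⟨z, hz⟩ := hcomp a hcau
  obtain ⟨hfz, hflow⟩ := lip1_limit h hc hf hfa hz
  -- the inverse sequence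
  have hcau' : PCauchy D (fun n => (a n)⁻¹) := by
    intro t ht ε hε
    obtain ⟨N, hN⟩ := hcau t ht ε hε
    refine ⟨N, fun n hn p hp => ?_⟩
    have e : D ((a n)⁻¹) ((a p)⁻¹) = D (a p) (a n) := by
      have e1 := h.invL ((a n)⁻¹) ((a p)⁻¹) (a n)
      have e2 := h.invR 1 (a n * (a p)⁻¹) (a p)
      simp only [mul_inv_cancel] at e1
      simp only [one_mul, inv_mul_cancel_right] at e2
      rw [← e1, e2]
    rw [e]
    exact hN p hp n hn
  obtain ⟨w, hw⟩ := hcomp _ hcau'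
  obtain ⟨hgw, hglow⟩ := lip1_limit h hc hg hga hw
  -- upper bound : f u ≤ δ_{w⁻¹} u
  have hupper : ∀ u : G, ∀ t : ℝ, f u t ≤ D u w⁻¹ t := by
    intro u t
    have e2 := congrFun (congrFun hfg (u * w)) t
    simp only [sconv, dlt] at e2
    have h3 := le_ciSup (hbddfg (u * w) t) w
    rw [e2] at h3
    simp only [mul_inv_cancel_right] at h3
    rw [hgw, h.tri.ident _ (hf.1 u)] at h3
    have e4 : D (u * w) 1 = D u w⁻¹ := by
      have := h.invR u w⁻¹ w; simpa using this
    rwa [e4] at h3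
  -- z = w⁻¹
  have hzw : z = w⁻¹ := by
    have h1 : ∀ t, H0 t ≤ D z w⁻¹ t := by
      intro t
      have := hupper z t
      rwa [hfz] at this
    have h2 : D z w⁻¹ = H0 :=
      funext fun t => le_antisymm (dpLE_H0 (h.mem z w⁻¹) t) (h1 t)
    exact (h.eq_iff z w⁻¹).1 h2
  refine ⟨z, funext fun u => funext fun t => le_antisymm ?_ (hflow u t)⟩
  rw [hzw] at *
  exact hupper u t

lemma iSup_equiv_real {α β : Type} (e : α ≃ β) (g : β → ℝ) :
    (⨆ a, g (e a)) = ⨆ b, g b := by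
  rw [iSup, iSup]
  congr 1
  ext x
  constructor
  · rintro ⟨a, rfl⟩; exact ⟨e a, rfl⟩
  · rintro ⟨b, rfl⟩; exact ⟨e.symm b, by simp⟩

section Transfer

variable {G G' : Type} [Group G] [Group G'] {D : G → G → ℝ → ℝ}
  {D' : G' → G' → ℝ → ℝ} {star : (ℝ → ℝ) → (ℝ → ℝ) → (ℝ → ℝ)}
  (I : G ≃* G') (hiso : ∀ x y : G, D' (I x) (I y) = D x y)

include hiso in
lemma lip1_comp {f : G → ℝ → ℝ} (hf : Lip1 D star f) :
    Lip1 D' star (fun x' => f (I.symm x')) := by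
  refine ⟨fun x' => hf.1 _, fun x' y' t => ?_⟩
  have e : D' x' y' = D (I.symm x') (I.symm y') := by
    have := hiso (I.symm x') (I.symm y'); simpa using this
  rw [e]
  exact hf.2 (I.symm x') (I.symm y') t

include hiso in
lemma inPi_comp {f : G → ℝ → ℝ} (hf : InPi D star f) :
    InPi D' star (fun x' => f (I.symm x')) := by
  obtain ⟨hl, a, hca, hconv⟩ := hf
  refine ⟨lip1_comp I hiso hl, fun n => I (a n), ?_, ?_⟩
  · intro t ht ε hε
    obtain ⟨N, hN⟩ := hca t ht ε hε
    exact ⟨N, fun n hn p hp => by rw [hiso (a n) (a p)]; exact hN n hn p hp⟩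
  · intro x'
    have e : (fun n => D' (I (a n)) x') = fun n => D (a n) (I.symm x') := by
      funext n
      have := hiso (a n) (I.symm x')
      simpa using this
    rw [e]
    exact hconv (I.symm x')

lemma DD_comp (f g : G → ℝ → ℝ) :
    DD star (fun x' => f (I.symm x')) (fun x' => g (I.symm x')) = DD star f g := by
  funext t
  simp only [DD]
  rw [← iSup_equiv_real I.toEquiv (fun x' => star (f (I.symm x')) (g (I.symm x')) t)]
  simp

end Transfer

/-- probabilistic Banach–Stone: two probabilistic invariant
complete metric groups are isometrically isomorphic iff their monoids of
probabilistic 1-Lipschitz maps are isometrically isomorphic. -/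
theorem stmt19 {G G' : Type} [Group G] [Group G']
    (D : G → G → ℝ → ℝ) (D' : G' → G' → ℝ → ℝ)
    (star : (ℝ → ℝ) → (ℝ → ℝ) → (ℝ → ℝ))
    (h : IsPIMG D star) (h' : IsPIMG D' star)
    (hc : StarCont star) (hsc : SupCont star)
    (htriv : ∀ U, (MemDP U ∧ ∃ V, MemDP V ∧ star U V = H0 ∧ star V U = H0) →
      U = H0)
    (hcomp : ∀ a : ℕ → G, PCauchy D a →
      ∃ z : G, WConv (fun n => D (a n) z) H0)
    (hcomp' : ∀ a : ℕ → G', PCauchy D' a →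
      ∃ z : G', WConv (fun n => D' (a n) z) H0) :
    (∃ I : G ≃* G', ∀ x y : G, D' (I x) (I y) = D x y) ↔
    (∃ Φ : (G → ℝ → ℝ) → (G' → ℝ → ℝ),
      (∀ f, Lip1 D star f → Lip1 D' star (Φ f)) ∧
      (∀ g, Lip1 D' star g → ∃ f, Lip1 D star f ∧ Φ f = g) ∧
      (∀ f g, Lip1 D star f → Lip1 D star g → Φ f = Φ g → f = g) ∧
      (∀ f g, Lip1 D star f → Lip1 D star g →
        Φ (sconv star f g) = sconv star (Φ f) (Φ g)) ∧
      Φ (dlt D 1) = dlt D' 1 ∧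
      (∀ f g, Lip1 D star f → Lip1 D star g →
        DDbar D' star (Φ f) (Φ g) = DDbar D star f g)) := by
  constructor
  · -- forward: transport along the isometric isomorphism
    rintro ⟨I, hiso⟩
    have hiso_symm : ∀ x' y' : G', D (I.symm x') (I.symm y') = D' x' y' := by
      intro x' y'; have := hiso (I.symm x') (I.symm y'); simpa using this.symm
    refine ⟨fun f => fun x' => f (I.symm x'), ?_, ?_, ?_, ?_, ?_, ?_⟩
    · exact fun f hf => lip1_comp I hiso hf
    · intro g hg
      refine ⟨fun x => g (I x), ?_, ?_⟩
      · have := lip1_comp I.symm hiso_symm hg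
        simpa using this
      · funext x'; simp
    · intro f g _ _ hfg
      funext x
      have := congrFun hfg (I x)
      simpa using this
    · intro f g _ _
      funext x' t
      simp only [sconv]
      rw [← iSup_equiv_real I.toEquiv
        (fun y' => star (f (I.symm (x' * y'⁻¹))) (g (I.symm y')) t)]
      congr 1
      funext y
      simp [map_mul]
    · funext x'
      simp only [dlt]
      have := hiso (I.symm x') 1
      simp only [MulEquiv.apply_symm_apply, map_one] at this
      exact this.symm
    · intro f g hf hg
      have hPiIff : ∀ f : G → ℝ → ℝ,
          InPi D' star (fun x' => f (I.symm x')) ↔ InPi D star f := by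
        intro f
        constructor
        · intro hp
          have := inPi_comp I.symm hiso_symm hp
          simpa using this
        · exact fun hp => inPi_comp I hiso hp
      have heqIff : ∀ f g : G → ℝ → ℝ,
          ((fun x' => f (I.symm x')) = fun x' => g (I.symm x')) ↔ f = g := by
        intro f g
        constructor
        · intro he; funext x; have := congrFun he (I x); simpa using this
        · intro he; rw [he]
      simp only [DDbar]
      by_cases hPi : InPi D star f ∧ InPi D star g
      · rw [if_pos hPi, if_pos ⟨(hPiIff f).2 hPi.1, (hPiIff g).2 hPi.2⟩]
        exact DD_comp I f g
      · rw [if_neg hPi, if_neg (fun hcon => hPi ⟨(hPiIff f).1 hcon.1, (hPiIff g).1 hcon.2⟩)]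
        by_cases he : f = g
        · rw [if_pos he, if_pos ((heqIff f g).2 he)]
        · rw [if_neg he, if_neg (fun hcon => he ((heqIff f g).1 hcon))]
  · -- reverse: reconstruct the isometry from the monoid isomorphism
    rintro ⟨Φ, hmaps, hsurj, hinj, hsconv, hid, hDD⟩
    have hkey : ∀ a : G, ∃ z : G', Φ (dlt D a) = dlt D' z := by
      intro a
      have hl1 := dlt_lip1 h.toIsPMS a
      have hl2 := dlt_lip1 h.toIsPMS a⁻¹
      have h1 : sconv star (Φ (dlt D a)) (Φ (dlt D a⁻¹)) = dlt D' 1 := by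
        rw [← hsconv _ _ hl1 hl2, sconv_dlt h, mul_inv_cancel, hid]
      have h2 : sconv star (Φ (dlt D a⁻¹)) (Φ (dlt D a)) = dlt D' 1 := by
        rw [← hsconv _ _ hl2 hl1, sconv_dlt h, inv_mul_cancel, hid]
      exact unit_eq_dlt h' hc hcomp' (hmaps _ hl1) (hmaps _ hl2) h1 h2
    choose J hJ using hkey
    have hJinj : Function.Injective J := by
      intro a b hab
      have he : Φ (dlt D a) = Φ (dlt D b) := by rw [hJ a, hJ b, hab]
      exact dlt_inj h.toIsPMS
        (hinj _ _ (dlt_lip1 h.toIsPMS a) (dlt_lip1 h.toIsPMS b) he)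
    have hJsurj : Function.Surjective J := by
      intro b'
      obtain ⟨f, hfl, hfe⟩ := hsurj (dlt D' b') (dlt_lip1 h'.toIsPMS b')
      obtain ⟨f', hfl', hfe'⟩ := hsurj (dlt D' b'⁻¹) (dlt_lip1 h'.toIsPMS b'⁻¹)
      have h1 : sconv star f f' = dlt D 1 := by
        apply hinj _ _ (sconv_lip1 h hsc hfl hfl') (dlt_lip1 h.toIsPMS 1)
        rw [hsconv _ _ hfl hfl', hfe, hfe', hid, sconv_dlt h', mul_inv_cancel]
      have h2 : sconv star f' f = dlt D 1 := by
        apply hinj _ _ (sconv_lip1 h hsc hfl' hfl) (dlt_lip1 h.toIsPMS 1)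
        rw [hsconv _ _ hfl' hfl, hfe', hfe, hid, sconv_dlt h', inv_mul_cancel]
      obtain ⟨b, hb⟩ := unit_eq_dlt h hc hcomp hfl hfl' h1 h2
      refine ⟨b, ?_⟩
      apply dlt_inj h'.toIsPMS
      rw [← hJ b, ← hb, hfe]
    have hJmul : ∀ a b : G, J (a * b) = J a * J b := by
      intro a b
      apply dlt_inj h'.toIsPMS
      rw [← hJ (a * b), ← sconv_dlt h', ← hJ a, ← hJ b,
        ← hsconv _ _ (dlt_lip1 h.toIsPMS a) (dlt_lip1 h.toIsPMS b), sconv_dlt h]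
    refine ⟨MulEquiv.mk' (Equiv.ofBijective J ⟨hJinj, hJsurj⟩) hJmul, ?_⟩
    intro x y
    have h1 := hDD (dlt D x) (dlt D y) (dlt_lip1 h.toIsPMS x) (dlt_lip1 h.toIsPMS y)
    rw [hJ x, hJ y] at h1
    simp only [DDbar] at h1
    rw [if_pos ⟨dlt_inPi h'.toIsPMS (J x), dlt_inPi h'.toIsPMS (J y)⟩,
      if_pos ⟨dlt_inPi h.toIsPMS x, dlt_inPi h.toIsPMS y⟩] at h1
    rw [DD_dlt h'.toIsPMS, DD_dlt h.toIsPMS] at h1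
    exact h1
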